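/- Under Lebesgue measure λ on (0,1), the digit sequence (d_n)_{n≥1} of the ROE is a Markov chain: λ({x : d_1(x) = j}) = 1/(j·(j−1)) for every j ≥ 2, and for every n ≥ 2, every admissible sequence (j_1,…,j_{n−1}) with j_{n−1} = j, and every integer k > h_{n−1}(j), the conditional probability satisfies λ(Δ_{j_1…j_{n−1} k})/λ(Δ_{j_1…j_{n−1}}) = h_{n−1}(j)/(k·(k−1)); this ratio depends only on j and k and not on j_1,…,j_{n−2}, and it is 0 for k ≤ h_{n−1}(j). -/
import Mathlib


open MeasureTheory Set

namespace ROE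

/-- The `x`-sequence of the restricted Oppenheim algorithm applied to `x`:
index `k` corresponds to the paper's `x_{k+1}`, and `a k`, `b k` correspond to the paper's
`a_{k+1}`, `b_{k+1}`.  So `X a b x 0 = x₁ = x` and
`x_{k+2} = (b_{k+1}(d_{k+1})/a_{k+1}(d_{k+1})) · (x_{k+1} - 1/d_{k+1})`. -/
noncomputable def X (a b : ℕ → ℕ → ℕ) (x : ℝ) : ℕ → ℝ
  | 0 => x
  | k + 1 =>
      let xk := X a b x k
      let d : ℕ := (⌊1 / xk⌋).toNat + 1
      ((b k d : ℝ) / (a k d : ℝ)) * (xk - 1 / (d : ℝ))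

/-- The digit `d_{k+1}(x) = ⌊1/x_{k+1}⌋ + 1` of the restricted Oppenheim expansion. -/
noncomputable def D (a b : ℕ → ℕ → ℕ) (x : ℝ) (k : ℕ) : ℕ :=
  (⌊1 / X a b x k⌋).toNat + 1

/-- The restricted Oppenheim expansion of `x` is infinite: all `x_n` lie in `(0,1)`. -/
def InfiniteROE (a b : ℕ → ℕ → ℕ) (x : ℝ) : Prop :=
  ∀ k, X a b x k ∈ Set.Ioo (0 : ℝ) 1

/-- The finite sequence `(j 0, …, j (n-1))` (the paper's `(j_1, …, j_n)`) is admissible: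
`j_1 ≥ 2` and `j_{i+1} > h_i(j_i)`.  Here `h i` corresponds to the paper's `h_{i+1}`. -/
def Admissible (h : ℕ → ℕ → ℕ) (n : ℕ) (j : ℕ → ℕ) : Prop :=
  2 ≤ j 0 ∧ ∀ i, i + 1 < n → h i (j i) < j (i + 1)

/-- The cylinder of rank `n` with base `(j 0, …, j (n-1))`: the set of `x ∈ (0,1)` with
infinite ROE whose first `n` digits are `j 0, …, j (n-1)`. -/
def cylinder (a b : ℕ → ℕ → ℕ) (n : ℕ) (j : ℕ → ℕ) : Set ℝ :=
  {x | x ∈ Set.Ioo (0 : ℝ) 1 ∧ InfiniteROE a b x ∧ ∀ i < n, D a b x i = j i}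

/-- The difference-ROE digit `α_{k+1}(x)`: `α₁ = d₁ - 1`, `α_{k+2} = d_{k+2} - h_{k+1}(d_{k+1})`. -/
noncomputable def alpha (a b h : ℕ → ℕ → ℕ) (x : ℝ) : ℕ → ℕ
  | 0 => D a b x 0 - 1
  | k + 1 => D a b x (k + 1) - h k (D a b x k)

/-- The digit sequence `d` reconstructed from a sequence `α` of difference-ROE symbols:
`d₁ = α₁ + 1`, `d_{k+2} = h_{k+1}(d_{k+1}) + α_{k+2}`. -/
def dSeq (h : ℕ → ℕ → ℕ) (α : ℕ → ℕ) : ℕ → ℕ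
  | 0 => α 0 + 1
  | k + 1 => h k (dSeq h α k) + α (k + 1)

/-- The real number whose difference-ROE digits are `(α k)`:
`Φ(α) = Σ_{n≥1} (∏_{i=1}^{n-1} a_i(d_i)/b_i(d_i)) · (1/d_n)`. -/
noncomputable def Phi (a b h : ℕ → ℕ → ℕ) (α : ℕ → ℕ) : ℝ :=
  ∑' n : ℕ, (∏ i ∈ Finset.range n, (a i (dSeq h α i) : ℝ) / (b i (dSeq h α i) : ℝ)) *
    (1 / (dSeq h α n : ℝ))

def Hyp (a b h : ℕ → ℕ → ℕ) : Prop :=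
  ∀ k j, 2 ≤ j → 0 < a k j ∧ 0 < b k j ∧ 0 < h k j ∧ b k j * h k j = a k j * j * (j - 1)

lemma X_zero (a b : ℕ → ℕ → ℕ) (x : ℝ) : X a b x 0 = x := rfl

lemma X_succ (a b : ℕ → ℕ → ℕ) (x : ℝ) (k : ℕ) :
    X a b x (k+1) = ((b k (D a b x k) : ℝ) / (a k (D a b x k) : ℝ)) *
      (X a b x k - 1 / (D a b x k : ℝ)) := rfl

lemma X_shift (a b : ℕ → ℕ → ℕ) (x : ℝ) (k : ℕ) :
    X a b x (k+1) = X (fun i => a (i+1)) (fun i => b (i+1)) (X a b x 1) k := by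
  induction k with
  | zero => rfl
  | succ k ih =>
    have hD : D a b x (k+1) = D (fun i => a (i+1)) (fun i => b (i+1)) (X a b x 1) k := by
      unfold D; rw [ih]
    rw [X_succ a b x (k+1), ih, hD,
      ← X_succ (fun i => a (i+1)) (fun i => b (i+1)) (X a b x 1) k]

lemma D_shift (a b : ℕ → ℕ → ℕ) (x : ℝ) (k : ℕ) :
    D a b x (k+1) = D (fun i => a (i+1)) (fun i => b (i+1)) (X a b x 1) k := by
  unfold D; rw [X_shift]

lemma D_zero_iff (a b : ℕ → ℕ → ℕ) {j : ℕ} (hj : 2 ≤ j) {x : ℝ} :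
    (x ∈ Ioc (0:ℝ) 1 ∧ D a b x 0 = j) ↔ x ∈ Ioc (1/(j:ℝ)) (1/((j:ℝ)-1)) := by
  have hD : D a b x 0 = (⌊1/x⌋).toNat + 1 := rfl
  have hj2 : (2:ℝ) ≤ (j:ℝ) := by exact_mod_cast hj
  have hj0 : (0:ℝ) < (j:ℝ) := by linarith
  have hj1 : (0:ℝ) < (j:ℝ) - 1 := by linarith
  constructor
  · rintro ⟨⟨hx0, hx1⟩, hDj⟩
    have h1x : (1:ℝ) ≤ 1/x := by rw [le_div_iff₀ hx0]; linarith
    have hfl1 : (1:ℤ) ≤ ⌊1/x⌋ := Int.le_floor.mpr (by push_cast; linarith)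
    have hfl : ⌊1/x⌋ = (j:ℤ) - 1 := by rw [hD] at hDj; omega
    have h1 : ((j:ℝ) - 1) ≤ 1/x := by
      have := Int.floor_le (1/x); rw [hfl] at this; push_cast at this; linarith
    have h2 : 1/x < (j:ℝ) := by
      have := Int.lt_floor_add_one (1/x); rw [hfl] at this; push_cast at this; linarith
    constructor
    · rw [div_lt_iff₀ hj0]; rw [div_lt_iff₀ hx0] at h2; nlinarith
    · rw [le_div_iff₀ hj1]; rw [le_div_iff₀ hx0] at h1; nlinarith
  · rintro ⟨hl, hr⟩
    have hx0 : 0 < x := lt_trans (by positivity) hl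
    have hx1 : x ≤ 1 := le_trans hr (by rw [div_le_one hj1]; linarith)
    have h2 : 1/x < (j:ℝ) := by rw [div_lt_iff₀ hx0]; rw [div_lt_iff₀ hj0] at hl; nlinarith
    have h1 : ((j:ℝ)-1) ≤ 1/x := by rw [le_div_iff₀ hx0]; rw [le_div_iff₀ hj1] at hr; nlinarith
    have hfl : ⌊1/x⌋ = (j:ℤ) - 1 := by
      rw [Int.floor_eq_iff]; constructor <;> push_cast <;> linarith
    refine ⟨⟨hx0, hx1⟩, ?_⟩
    rw [hD, hfl]; omega

lemma step_mem {a b h : ℕ → ℕ → ℕ} (H : Hyp a b h) (k : ℕ) {x : ℝ}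
    (hx : X a b x k ∈ Ioc (0:ℝ) 1) :
    2 ≤ D a b x k ∧ 1 ≤ h k (D a b x k) ∧
      X a b x (k+1) ∈ Ioc (0:ℝ) (1/(h k (D a b x k) : ℝ)) := by
  set y := X a b x k with hy
  have hDdef : D a b x k = (⌊1/y⌋).toNat + 1 := rfl
  obtain ⟨hy0, hy1⟩ := hx
  have h1y : (1:ℝ) ≤ 1/y := by rw [le_div_iff₀ hy0]; linarith
  have hfl1 : (1:ℤ) ≤ ⌊1/y⌋ := Int.le_floor.mpr (by push_cast; linarith)
  have hd2 : 2 ≤ D a b x k := by omega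
  set d := D a b x k with hdd
  obtain ⟨hA, hB, hH, hKey⟩ := H k d hd2
  have hfl : ⌊1/y⌋ = (d:ℤ) - 1 := by omega
  have hdR : (2:ℝ) ≤ (d:ℝ) := by exact_mod_cast hd2
  have h1 : ((d:ℝ) - 1) ≤ 1/y := by
    have := Int.floor_le (1/y); rw [hfl] at this; push_cast at this; linarith
  have h2 : 1/y < (d:ℝ) := by
    have := Int.lt_floor_add_one (1/y); rw [hfl] at this; push_cast at this; linarith
  have hygt : 1/(d:ℝ) < y := by
    rw [div_lt_iff₀ (by linarith : (0:ℝ) < (d:ℝ))]; rw [div_lt_iff₀ hy0] at h2; nlinarith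
  have hyle : y ≤ 1/((d:ℝ)-1) := by
    rw [le_div_iff₀ (by linarith : (0:ℝ) < (d:ℝ)-1)]; rw [le_div_iff₀ hy0] at h1; nlinarith
  have hAR : (0:ℝ) < (a k d : ℝ) := by exact_mod_cast hA
  have hBR : (0:ℝ) < (b k d : ℝ) := by exact_mod_cast hB
  have hHR : (0:ℝ) < (h k d : ℝ) := by exact_mod_cast hH
  have hKeyR : (b k d : ℝ) * (h k d : ℝ) = (a k d : ℝ) * (d:ℝ) * ((d:ℝ)-1) := by
    have hc : ((b k d * h k d : ℕ) : ℝ) = ((a k d * d * (d - 1) : ℕ) : ℝ) := by exact_mod_cast hKey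
    push_cast [Nat.cast_sub (show 1 ≤ d by omega)] at hc
    linear_combination hc
  have hXs : X a b x (k+1) = ((b k d : ℝ)/(a k d : ℝ)) * (y - 1/(d:ℝ)) := X_succ a b x k
  refine ⟨hd2, hH, ?_, ?_⟩
  · rw [hXs]; exact mul_pos (div_pos hBR hAR) (by linarith)
  · rw [hXs]
    have hd0' : (d:ℝ) ≠ 0 := by linarith
    have hd1' : (d:ℝ) - 1 ≠ 0 := by linarith
    have hdd1' : (d:ℝ) * ((d:ℝ)-1) ≠ 0 := mul_ne_zero hd0' hd1'
    have e0 : 1/((d:ℝ)-1) - 1/(d:ℝ) = 1/((d:ℝ)*((d:ℝ)-1)) := by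
      field_simp
      ring
    have hsub : y - 1/(d:ℝ) ≤ 1/((d:ℝ)*((d:ℝ)-1)) := by linarith
    have e1 : ((b k d : ℝ)/(a k d : ℝ)) * (1/((d:ℝ)*((d:ℝ)-1))) = 1/(h k d : ℝ) := by
      rw [div_mul_div_comm, mul_one, div_eq_div_iff (by positivity) (ne_of_gt hHR)]
      linear_combination hKeyR
    calc ((b k d : ℝ)/(a k d : ℝ)) * (y - 1/(d:ℝ))
        ≤ ((b k d : ℝ)/(a k d : ℝ)) * (1/((d:ℝ)*((d:ℝ)-1))) := by
          exact mul_le_mul_of_nonneg_left hsub (le_of_lt (div_pos hBR hAR))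
      _ = 1/(h k d : ℝ) := e1

lemma X_mem_Ioc {a b h : ℕ → ℕ → ℕ} (H : Hyp a b h) {x : ℝ} (hx : x ∈ Ioc (0:ℝ) 1) (k : ℕ) :
    X a b x k ∈ Ioc (0:ℝ) 1 := by
  induction k with
  | zero => exact hx
  | succ k ih =>
    obtain ⟨hd2, hH1, hmem⟩ := step_mem H k ih
    refine ⟨hmem.1, hmem.2.trans ?_⟩
    have hHR : (0:ℝ) < (h k (D a b x k) : ℝ) := by exact_mod_cast lt_of_lt_of_le one_pos hH1
    rw [div_le_one hHR]
    exact_mod_cast hH1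

lemma D_gt {a b h : ℕ → ℕ → ℕ} (H : Hyp a b h) {x : ℝ} (hx : x ∈ Ioc (0:ℝ) 1) (k : ℕ) :
    h k (D a b x k) < D a b x (k+1) := by
  obtain ⟨hd2, hH1, hm0, hm1⟩ := step_mem H k (X_mem_Ioc H hx k)
  have hHR : (0:ℝ) < (h k (D a b x k) : ℝ) := by exact_mod_cast lt_of_lt_of_le one_pos hH1
  have hle : (h k (D a b x k) : ℝ) ≤ 1 / X a b x (k+1) := by
    rw [le_div_iff₀ hm0]
    rw [le_div_iff₀ hHR] at hm1
    nlinarith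
  have hfl : (h k (D a b x k) : ℤ) ≤ ⌊1 / X a b x (k+1)⌋ :=
    Int.le_floor.mpr (by exact_mod_cast hle)
  have hDdef : D a b x (k+1) = (⌊1 / X a b x (k+1)⌋).toNat + 1 := rfl
  omega

lemma X_inj {a b h : ℕ → ℕ → ℕ} (H : Hyp a b h) (M : ℕ) :
    ∀ {x y : ℝ}, x ∈ Ioc (0:ℝ) 1 → y ∈ Ioc (0:ℝ) 1 →
      (∀ i, i < M → D a b x i = D a b y i) → X a b x M = X a b y M → x = y := by
  induction M with
  | zero => intro x y _ _ _ hXY; exact hXY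
  | succ M ih =>
    intro x y hx hy hD hXY
    have hdm : D a b x M = D a b y M := hD M (Nat.lt_succ_self M)
    obtain ⟨hd2, -, -⟩ := step_mem H M (X_mem_Ioc H hx M)
    obtain ⟨hA, hB, -, -⟩ := H M (D a b x M) hd2
    have hc : (0:ℝ) < (b M (D a b x M) : ℝ) / (a M (D a b x M) : ℝ) :=
      div_pos (by exact_mod_cast hB) (by exact_mod_cast hA)
    rw [X_succ a b x M, X_succ a b y M, ← hdm] at hXY
    have h2 := mul_left_cancel₀ (ne_of_gt hc) hXY
    have hXM : X a b x M = X a b y M := by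
      have := sub_left_inj.mp h2; exact this
    exact ih hx hy (fun i hi => hD i (Nat.lt_succ_of_lt hi)) hXM

lemma countable_bad {a b h : ℕ → ℕ → ℕ} (H : Hyp a b h) :
    {x : ℝ | x ∈ Ioc (0:ℝ) 1 ∧ ¬ InfiniteROE a b x}.Countable := by
  have hsub : {x : ℝ | x ∈ Ioc (0:ℝ) 1 ∧ ¬ InfiniteROE a b x} ⊆
      ⋃ M : ℕ, ⋃ p : Fin M → ℕ,
        {x : ℝ | x ∈ Ioc (0:ℝ) 1 ∧ X a b x M = 1 ∧ ∀ i : Fin M, D a b x i = p i} := by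
    rintro x ⟨hx, hnot⟩
    simp only [InfiniteROE, not_forall] at hnot
    obtain ⟨M, hM⟩ := hnot
    have hIoc := X_mem_Ioc H hx M
    have hone : X a b x M = 1 := by
      rcases lt_or_eq_of_le hIoc.2 with hlt | heq
      · exact absurd ⟨hIoc.1, hlt⟩ hM
      · exact heq
    exact mem_iUnion.mpr ⟨M, mem_iUnion.mpr ⟨fun i => D a b x i, ⟨hx, hone, fun i => rfl⟩⟩⟩
  refine Set.Countable.mono hsub ?_
  refine Set.countable_iUnion fun M => Set.countable_iUnion fun p => ?_
  apply Set.Subsingleton.countable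
  rintro x ⟨hx, hx1, hxd⟩ y ⟨hy, hy1, hyd⟩
  exact X_inj H M hx hy (fun i hi => (hxd ⟨i, hi⟩).trans (hyd ⟨i, hi⟩).symm)
    (hx1.trans hy1.symm)

lemma vol_cyl_eq {a b h : ℕ → ℕ → ℕ} (H : Hyp a b h) (n : ℕ) (j : ℕ → ℕ) :
    volume (cylinder a b n j) =
      volume {x : ℝ | x ∈ Ioc (0:ℝ) 1 ∧ ∀ i < n, D a b x i = j i} := by
  have hBad0 : volume {x : ℝ | x ∈ Ioc (0:ℝ) 1 ∧ ¬ InfiniteROE a b x} = 0 :=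
    (countable_bad H).measure_zero _
  apply le_antisymm
  · apply measure_mono
    rintro x ⟨hx, _, hd⟩
    exact ⟨⟨hx.1, le_of_lt hx.2⟩, hd⟩
  · calc volume {x : ℝ | x ∈ Ioc (0:ℝ) 1 ∧ ∀ i < n, D a b x i = j i}
        = volume ({x : ℝ | x ∈ Ioc (0:ℝ) 1 ∧ ∀ i < n, D a b x i = j i}
            \ {x : ℝ | x ∈ Ioc (0:ℝ) 1 ∧ ¬ InfiniteROE a b x}) :=
          (measure_diff_null hBad0).symm
      _ ≤ volume (cylinder a b n j) := by
          apply measure_mono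
          rintro x ⟨⟨hx, hd⟩, hnb⟩
          have hInf : InfiniteROE a b x := by
            by_contra hni; exact hnb ⟨hx, hni⟩
          exact ⟨hInf 0, hInf, hd⟩

lemma vol_C : ∀ (n : ℕ) (a b h : ℕ → ℕ → ℕ), Hyp a b h → ∀ j : ℕ → ℕ,
    Admissible h (n+1) j →
    volume {x : ℝ | x ∈ Ioc (0:ℝ) 1 ∧ ∀ i < n+1, D a b x i = j i} =
      ENNReal.ofReal ((∏ i ∈ Finset.range n, (a i (j i) : ℝ) / (b i (j i) : ℝ)) *
        (1 / ((j n : ℝ) * ((j n : ℝ) - 1)))) := by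
  intro n
  induction n with
  | zero =>
    intro a b h H j hadm
    have hj2 : 2 ≤ j 0 := hadm.1
    have hjR : (2:ℝ) ≤ (j 0 : ℝ) := by exact_mod_cast hj2
    have hset : {x : ℝ | x ∈ Ioc (0:ℝ) 1 ∧ ∀ i < 1, D a b x i = j i}
        = Ioc (1/(j 0 : ℝ)) (1/((j 0 : ℝ) - 1)) := by
      ext x
      rw [mem_setOf_eq, ← D_zero_iff a b hj2]
      constructor
      · rintro ⟨hx, hd⟩; exact ⟨hx, hd 0 Nat.one_pos⟩
      · rintro ⟨hx, hd⟩
        exact ⟨hx, fun i hi => by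
          have h0 : i = 0 := by omega
          rw [h0]; exact hd⟩
    rw [hset, Real.volume_Ioc, Finset.prod_range_zero, one_mul]
    congr 1
    have h1 : (j 0:ℝ) ≠ 0 := by linarith
    have h2 : (j 0:ℝ) - 1 ≠ 0 := by linarith
    field_simp
    ring
  | succ n IH =>
    intro a b h H j hadm
    have hj0 : 2 ≤ j 0 := hadm.1
    obtain ⟨hA, hB, hH0, hKey⟩ := H 0 (j 0) hj0
    have hj1 : h 0 (j 0) < j 1 := hadm.2 0 (by omega)
    have hj1_2 : 2 ≤ j 1 := by omega
    have hAR : (0:ℝ) < (a 0 (j 0) : ℝ) := by exact_mod_cast hA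
    have hBR : (0:ℝ) < (b 0 (j 0) : ℝ) := by exact_mod_cast hB
    have hHR : (0:ℝ) < (h 0 (j 0) : ℝ) := by exact_mod_cast hH0
    have hH1R : (1:ℝ) ≤ (h 0 (j 0) : ℝ) := by exact_mod_cast hH0
    have hj0R : (2:ℝ) ≤ (j 0 : ℝ) := by exact_mod_cast hj0
    set c : ℝ := (b 0 (j 0) : ℝ) / (a 0 (j 0) : ℝ) with hcdef
    have hc : 0 < c := div_pos hBR hAR
    have hKeyR : (b 0 (j 0) : ℝ) * (h 0 (j 0) : ℝ)
        = (a 0 (j 0) : ℝ) * (j 0 : ℝ) * ((j 0:ℝ) - 1) := by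
      have hcast : ((b 0 (j 0) * h 0 (j 0) : ℕ) : ℝ)
          = ((a 0 (j 0) * j 0 * (j 0 - 1) : ℕ) : ℝ) := by exact_mod_cast hKey
      push_cast [Nat.cast_sub (show 1 ≤ j 0 by omega)] at hcast
      linear_combination hcast
    have hadm' : Admissible (fun i => h (i+1)) (n+1) (fun i => j (i+1)) :=
      ⟨hj1_2, fun i hi => hadm.2 (i+1) (by omega)⟩
    have e1 : c * (1/((j 0:ℝ)-1) - 1/(j 0:ℝ)) = 1/((h 0 (j 0)):ℝ) := by
      rw [hcdef]
      have h1 : (j 0:ℝ) ≠ 0 := by linarith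
      have h2 : (j 0:ℝ) - 1 ≠ 0 := by linarith
      have h3 : (a 0 (j 0):ℝ) ≠ 0 := ne_of_gt hAR
      have h4 : (h 0 (j 0):ℝ) ≠ 0 := ne_of_gt hHR
      field_simp
      linear_combination hKeyR
    have hset : {x : ℝ | x ∈ Ioc (0:ℝ) 1 ∧ ∀ i < n+1+1, D a b x i = j i}
        = (fun x : ℝ => c * (x - 1/(j 0 : ℝ))) ⁻¹'
          {x : ℝ | x ∈ Ioc (0:ℝ) 1 ∧
            ∀ i < n+1, D (fun i => a (i+1)) (fun i => b (i+1)) x i = j (i+1)} := by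
      ext x
      simp only [mem_setOf_eq, mem_preimage]
      constructor
      · rintro ⟨hx, hd⟩
        have h0 : D a b x 0 = j 0 := hd 0 (by omega)
        have hX1 : X a b x 1 = c * (x - 1/(j 0 : ℝ)) := by
          have e := X_succ a b x 0
          rw [h0, X_zero, ← hcdef] at e
          exact e
        obtain ⟨hd2, hH1, hm⟩ := step_mem H 0 (show X a b x 0 ∈ Ioc (0:ℝ) 1 from hx)
        rw [h0] at hm
        refine ⟨?_, ?_⟩
        · rw [← hX1]
          refine ⟨hm.1, hm.2.trans ?_⟩
          rw [div_le_one hHR]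
          exact hH1R
        · intro i hi
          rw [← hX1, ← D_shift]
          exact hd (i+1) (by omega)
      · rintro ⟨hfx, hd'⟩
        have hy1 : D (fun i => a (i+1)) (fun i => b (i+1)) (c * (x - 1/(j 0:ℝ))) 0 = j 1 :=
          hd' 0 (by omega)
        have hy_mem := (D_zero_iff _ _ hj1_2).mp ⟨hfx, hy1⟩
        have hhj1R : (h 0 (j 0) : ℝ) ≤ (j 1 : ℝ) - 1 := by
          have hcast : ((h 0 (j 0) + 1 : ℕ) : ℝ) ≤ ((j 1 : ℕ) : ℝ) := by exact_mod_cast hj1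
          push_cast at hcast; linarith
        have hyle : c * (x - 1/(j 0:ℝ)) ≤ 1/((h 0 (j 0)):ℝ) :=
          le_trans hy_mem.2 (one_div_le_one_div_of_le hHR hhj1R)
        have hygt : 0 < c * (x - 1/(j 0:ℝ)) := lt_trans (by positivity) hy_mem.1
        have hx_mem : x ∈ Ioc (1/(j 0:ℝ)) (1/((j 0:ℝ)-1)) := by
          constructor
          · nlinarith
          · have hle2 : c * (x - 1/(j 0:ℝ)) ≤ c * (1/((j 0:ℝ)-1) - 1/(j 0:ℝ)) := by
              linarith
            have := le_of_mul_le_mul_left hle2 hc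
            linarith
        obtain ⟨hx01, hD0⟩ := (D_zero_iff a b hj0).mpr hx_mem
        have hX1 : X a b x 1 = c * (x - 1/(j 0 : ℝ)) := by
          have e := X_succ a b x 0
          rw [hD0, X_zero, ← hcdef] at e
          exact e
        refine ⟨hx01, ?_⟩
        intro i hi
        cases i with
        | zero => exact hD0
        | succ i =>
          rw [D_shift, hX1]
          exact hd' i (by omega)
    rw [hset]
    have hcomp : (fun x : ℝ => c * (x - 1/(j 0 : ℝ)))
        = (fun y : ℝ => c * y) ∘ (fun x : ℝ => x + (-(1/(j 0 : ℝ)))) := by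
      funext x; simp [sub_eq_add_neg]
    rw [hcomp, Set.preimage_comp, measure_preimage_add_right,
      Real.volume_preimage_mul_left (ne_of_gt hc)]
    rw [IH (fun i => a (i+1)) (fun i => b (i+1)) (fun i => h (i+1))
      (fun k jj hj => H (k+1) jj hj) (fun i => j (i+1)) hadm']
    rw [abs_of_pos (inv_pos.mpr hc), ← ENNReal.ofReal_mul (le_of_lt (inv_pos.mpr hc))]
    congr 1
    rw [Finset.prod_range_succ']
    have hcinv : c⁻¹ = (a 0 (j 0) : ℝ) / (b 0 (j 0) : ℝ) := by rw [hcdef, inv_div]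
    rw [hcinv]
    ring

/-- Under Lebesgue measure on `(0,1)` the ROE digit sequence is a Markov chain:
`λ({x : d₁(x) = j}) = 1/(j(j-1))` for `j ≥ 2`; for every `n ≥ 2` (here `n = m + 1` with
`m ≥ 1`), every admissible `(j_1, …, j_{n-1})` and every `k > h_{n-1}(j_{n-1})`,
`λ(Δ_{j_1…j_{n-1}k}) / λ(Δ_{j_1…j_{n-1}}) = h_{n-1}(j_{n-1}) / (k(k-1))` — a quantity depending
only on `j_{n-1}` and `k` — and the transition probability is `0` when `k ≤ h_{n-1}(j_{n-1})`. -/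
theorem roe_markov_chain (a b h : ℕ → ℕ → ℕ)
    (ha : ∀ k j, 2 ≤ j → 0 < a k j) (hb : ∀ k j, 2 ≤ j → 0 < b k j)
    (hpos : ∀ k j, 2 ≤ j → 0 < h k j)
    (hab : ∀ k j, 2 ≤ j → b k j * h k j = a k j * j * (j - 1)) :
    (∀ j : ℕ, 2 ≤ j →
      volume (cylinder a b 1 (fun _ => j)) =
        ENNReal.ofReal (1 / ((j : ℝ) * ((j : ℝ) - 1)))) ∧
    (∀ m : ℕ, 1 ≤ m → ∀ j : ℕ → ℕ, Admissible h m j → ∀ k : ℕ,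
      h (m - 1) (j (m - 1)) < k →
        volume (cylinder a b (m + 1) (Function.update j m k)) /
            volume (cylinder a b m j) =
          ENNReal.ofReal ((h (m - 1) (j (m - 1)) : ℝ) / ((k : ℝ) * ((k : ℝ) - 1)))) ∧
    (∀ m : ℕ, 1 ≤ m → ∀ j : ℕ → ℕ, Admissible h m j → ∀ k : ℕ,
      k ≤ h (m - 1) (j (m - 1)) →
        volume (cylinder a b (m + 1) (Function.update j m k)) /
            volume (cylinder a b m j) = 0) := by
  have H : Hyp a b h := fun k j hj => ⟨ha k j hj, hb k j hj, hpos k j hj, hab k j hj⟩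
  have adm2 : ∀ n (j : ℕ → ℕ), Admissible h n j → ∀ i, i < n → 2 ≤ j i := by
    intro n j hadm i
    induction i with
    | zero => intro _; exact hadm.1
    | succ i ih =>
      intro hi
      have h2 := ih (by omega)
      have h3 := hadm.2 i (by omega)
      have h4 := hpos i (j i) h2
      omega
  have main : ∀ (n : ℕ) (j : ℕ → ℕ), Admissible h (n+1) j →
      volume (cylinder a b (n+1) j) =
        ENNReal.ofReal ((∏ i ∈ Finset.range n, (a i (j i) : ℝ)/(b i (j i) : ℝ)) *
          (1/((j n:ℝ) * ((j n:ℝ)-1)))) :=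
    fun n j hadm => (vol_cyl_eq H (n+1) j).trans (vol_C n a b h H j hadm)
  refine ⟨?_, ?_, ?_⟩
  · intro j hj
    rw [main 0 (fun _ => j) ⟨hj, fun i hi => absurd hi (by omega)⟩,
      Finset.prod_range_zero, one_mul]
  · intro m hm j hadm k hk
    obtain ⟨p, rfl⟩ : ∃ p, m = p + 1 := ⟨m - 1, by omega⟩
    simp only [Nat.add_sub_cancel] at hk ⊢
    have hadmU : Admissible h (p+1+1) (Function.update j (p+1) k) := by
      constructor
      · rw [Function.update_of_ne (by omega)]
        exact hadm.1
      · intro i hi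
        rcases Nat.lt_or_ge (i+1) (p+1) with hlt | hge
        · rw [Function.update_of_ne (by omega), Function.update_of_ne (by omega)]
          exact hadm.2 i (by omega)
        · have hip : i = p := by omega
          subst hip
          rw [Function.update_of_ne (by omega), Function.update_self]
          exact hk
    have hd2 : ∀ i, i < p+1 → 2 ≤ j i := adm2 (p+1) j hadm
    have hjp2 : 2 ≤ j p := hd2 p (by omega)
    have hk2 : 2 ≤ k := by have := hpos p (j p) hjp2; omega
    rw [main (p+1) _ hadmU, main p j hadm]
    have hprodeq : (∏ i ∈ Finset.range (p+1),
          (a i (Function.update j (p+1) k i) : ℝ)/(b i (Function.update j (p+1) k i) : ℝ))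
        = ∏ i ∈ Finset.range (p+1), (a i (j i):ℝ)/(b i (j i):ℝ) := by
      apply Finset.prod_congr rfl
      intro i hi
      rw [Function.update_of_ne (Nat.ne_of_lt (Finset.mem_range.mp hi))]
    rw [hprodeq, Function.update_self, Finset.prod_range_succ]
    obtain ⟨hA, hB, hHp, hKey⟩ := H p (j p) hjp2
    have hAR : (0:ℝ) < (a p (j p):ℝ) := by exact_mod_cast hA
    have hBR : (0:ℝ) < (b p (j p):ℝ) := by exact_mod_cast hB
    have hHR : (0:ℝ) < (h p (j p):ℝ) := by exact_mod_cast hHp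
    have hJ : (2:ℝ) ≤ (j p : ℝ) := by exact_mod_cast hjp2
    have hKR : (2:ℝ) ≤ (k:ℝ) := by exact_mod_cast hk2
    have hKeyR : (b p (j p):ℝ) * (h p (j p):ℝ)
        = (a p (j p):ℝ) * (j p:ℝ) * ((j p:ℝ)-1) := by
      have hcast : ((b p (j p) * h p (j p) : ℕ) : ℝ)
          = ((a p (j p) * j p * (j p - 1) : ℕ) : ℝ) := by exact_mod_cast hKey
      push_cast [Nat.cast_sub (show 1 ≤ j p by omega)] at hcast
      linear_combination hcast
    have hQpos : (0:ℝ) < ∏ i ∈ Finset.range p, (a i (j i):ℝ)/(b i (j i):ℝ) := by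
      apply Finset.prod_pos
      intro i hi
      have hi2 : 2 ≤ j i := hd2 i (by have := Finset.mem_range.mp hi; omega)
      obtain ⟨hAi, hBi, -, -⟩ := H i (j i) hi2
      exact div_pos (by exact_mod_cast hAi) (by exact_mod_cast hBi)
    have hJJ : (0:ℝ) < (j p:ℝ) * ((j p:ℝ)-1) := by nlinarith
    have hPd : (0:ℝ) < (∏ i ∈ Finset.range p, (a i (j i):ℝ)/(b i (j i):ℝ))
        * (1/((j p:ℝ) * ((j p:ℝ)-1))) := by positivity
    rw [← ENNReal.ofReal_div_of_pos hPd]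
    congr 1
    have hABH : (a p (j p):ℝ)/(b p (j p):ℝ) = (h p (j p):ℝ)/((j p:ℝ)*((j p:ℝ)-1)) := by
      rw [div_eq_div_iff (ne_of_gt hBR) (ne_of_gt hJJ)]
      linear_combination -hKeyR
    have harith : (∏ i ∈ Finset.range p, (a i (j i):ℝ)/(b i (j i):ℝ))
          * ((a p (j p):ℝ)/(b p (j p):ℝ)) * (1/((k:ℝ)*((k:ℝ)-1)))
        = ((h p (j p):ℝ)/((k:ℝ)*((k:ℝ)-1)))
          * ((∏ i ∈ Finset.range p, (a i (j i):ℝ)/(b i (j i):ℝ))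
            * (1/((j p:ℝ)*((j p:ℝ)-1)))) := by
      rw [hABH]; ring
    rw [harith, mul_div_assoc]
    rw [div_self (ne_of_gt hPd), mul_one]
  · intro m hm j hadm k hk
    obtain ⟨p, rfl⟩ : ∃ p, m = p + 1 := ⟨m - 1, by omega⟩
    simp only [Nat.add_sub_cancel] at hk
    have hempty : cylinder a b (p+1+1) (Function.update j (p+1) k) = ∅ := by
      ext x
      simp only [mem_empty_iff_false, iff_false]
      rintro ⟨hx, hInf, hd⟩
      have hx' : x ∈ Ioc (0:ℝ) 1 := ⟨hx.1, hx.2.le⟩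
      have hgt := D_gt H hx' p
      have e1 : D a b x p = j p := by
        have := hd p (by omega)
        rwa [Function.update_of_ne (by omega)] at this
      have e2 : D a b x (p+1) = k := by
        have := hd (p+1) (by omega)
        rwa [Function.update_self] at this
      rw [e1, e2] at hgt
      omega
    rw [hempty, measure_empty, ENNReal.zero_div]


end ROE
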